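/- Let Γ be a finite n-valent GKM graph of rank k with axial function α : directed edges → ℤ^k satisfying α(q,p) = −α(p,q), and let F be a subgraph closed under a connection θ (for every edge (p,q) of F, θ_{(p,q)} maps star(p) ∩ F bijectively onto star(q) ∩ F), with the connection satisfying α(θ_{(p,q)} e) − α(e) ∈ ℤ·α(p,q) for all e ∈ star(p). Define τ_F : V → ℤ[x_1,…,x_k] by τ_F(p) = ∏_{e ∈ star(p), e ∉ F} ℓ_{α(e)} if p ∈ F and τ_F(p) = 0 otherwise, where ℓ_β denotes the linear form ∑ β_i x_i. Then for every edge (p,q) of Γ, τ_F(p) ≡ τ_F(q) modulo the ideal (ℓ_{α(p,q)}). -/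

import Mathlib

open scoped Classical

/-- A connection on a graph. -/
structure SimpleGraph.Connection {V : Type} (G : SimpleGraph V) where
  θ : ∀ ⦃p q : V⦄, G.Adj p q → (G.neighborSet p ≃ G.neighborSet q)
  fix : ∀ ⦃p q : V⦄ (h : G.Adj p q), θ h ⟨q, h⟩ = ⟨p, h.symm⟩
  symm : ∀ ⦃p q : V⦄ (h : G.Adj p q), θ h.symm = (θ h).symm

/-- The linear form `ℓ_β = ∑ β_i x_i` in `ℤ[x_1,…,x_k]` associated with `β ∈ ℤ^k`. -/
noncomputable def linForm (k : ℕ) (β : Fin k → ℤ) : MvPolynomial (Fin k) ℤ :=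
  ∑ i : Fin k, MvPolynomial.C (β i) * MvPolynomial.X i

/-- The Thom class of a subgraph `F`: at a vertex `p` of `F` it is the product of the
linear forms of the labels of the edges at `p` transversal to `F`, and it is `0` at
vertices not in `F`. -/
noncomputable def thomClass {V : Type} [Fintype V] {G : SimpleGraph V}
    (k : ℕ) (α : V → V → (Fin k → ℤ)) (F : G.Subgraph) (p : V) :
    MvPolynomial (Fin k) ℤ :=
  if p ∈ F.verts then
    ∏ q ∈ Finset.univ.filter (fun q => G.Adj p q ∧ ¬ F.Adj p q), linForm k (α p q)
  else 0

lemma linForm_neg (k : ℕ) (β : Fin k → ℤ) : linForm k (-β) = - linForm k β := by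
  simp [linForm, Finset.sum_neg_distrib]

lemma linForm_add_smul (k : ℕ) (β γ : Fin k → ℤ) (c : ℤ) :
    linForm k (β + c • γ) = linForm k β + MvPolynomial.C c * linForm k γ := by
  simp only [linForm, Pi.add_apply, Pi.smul_apply, smul_eq_mul, map_add, map_mul,
    add_mul, Finset.sum_add_distrib, Finset.mul_sum, mul_assoc]

lemma dvd_prod_sub_prod {ι R : Type*} [CommRing R] (t : R) (f g : ι → R) (s : Finset ι)
    (h : ∀ i ∈ s, t ∣ f i - g i) : t ∣ ∏ i ∈ s, f i - ∏ i ∈ s, g i := by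
  classical
  induction s using Finset.induction with
  | empty => simp
  | @insert a s ha ih =>
    rw [Finset.prod_insert ha, Finset.prod_insert ha]
    have key : f a * ∏ i ∈ s, f i - g a * ∏ i ∈ s, g i
        = (f a - g a) * ∏ i ∈ s, f i + g a * (∏ i ∈ s, f i - ∏ i ∈ s, g i) := by ring
    rw [key]
    exact dvd_add ((h a (Finset.mem_insert_self a s)).mul_right _)
      ((ih fun i hi => h i (Finset.mem_insert_of_mem hi)).mul_left _)

/-- For an `n`-valent GKM graph of rank `k` with axial function `α`
(satisfying `α(q,p) = -α(p,q)` and the connection congruence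
`α(θ e) - α(e) ∈ ℤ·α(p,q)`), and a totally geodesic face `F` (a `θ`-closed subgraph),
the Thom class `τ_F` satisfies the GKM congruences: `τ_F(p) ≡ τ_F(q) mod (ℓ_{α(p,q)})`
for every edge `(p,q)` of `Γ`. -/
theorem thomClass_gkm_congruence
    {V : Type} [Fintype V] [DecidableEq V] (G : SimpleGraph V)
    (n k : ℕ) (hreg : ∀ v : V, (G.neighborSet v).ncard = n)
    (α : V → V → (Fin k → ℤ))
    (hαsymm : ∀ p q : V, G.Adj p q → α q p = -α p q)
    (C : G.Connection)
    (hcompat : ∀ ⦃p q : V⦄ (h : G.Adj p q) (e : G.neighborSet p),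
      ∃ c : ℤ, α q ((C.θ h e : V)) = α p (e : V) + c • α p q)
    (F : G.Subgraph)
    (hface : ∀ ⦃p q : V⦄ (h : G.Adj p q), F.Adj p q →
      ∀ e : G.neighborSet p, F.Adj p (e : V) → F.Adj q ((C.θ h e : V))) :
    ∀ p q : V, G.Adj p q →
      ∃ g : MvPolynomial (Fin k) ℤ,
        thomClass k α F p - thomClass k α F q = linForm k (α p q) * g := by
  intro p q h
  set ℓ := linForm k (α p q) with hℓ
  suffices hdvd : ℓ ∣ thomClass k α F p - thomClass k α F q by
    obtain ⟨g, hg⟩ := hdvd; exact ⟨g, hg⟩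
  -- the linear form of the reversed edge is `-ℓ`
  have hrev : linForm k (α q p) = -ℓ := by rw [hαsymm p q h, linForm_neg]
  -- divisibility of each Thom class when the edge is transversal
  have hdvdP : ∀ p' q' : V, G.Adj p' q' → ¬ F.Adj p' q' →
      linForm k (α p' q') ∣ thomClass k α F p' := by
    intro p' q' h' hF'
    by_cases hp' : p' ∈ F.verts
    · rw [thomClass, if_pos hp']
      exact Finset.dvd_prod_of_mem _ (by simp [h', hF'])
    · rw [thomClass, if_neg hp']; exact dvd_zero _
  by_cases hFadj : F.Adj p q
  · -- the edge lies in the face: use the connection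
    have hp : p ∈ F.verts := F.edge_vert hFadj
    have hq : q ∈ F.verts := F.edge_vert hFadj.symm
    set Sp := Finset.univ.filter (fun r => G.Adj p r ∧ ¬ F.Adj p r) with hSp
    set Sq := Finset.univ.filter (fun r => G.Adj q r ∧ ¬ F.Adj q r) with hSq
    -- key: θ preserves being in the face
    have key : ∀ (r : V) (hr : G.Adj p r),
        (F.Adj q ((C.θ h ⟨r, hr⟩ : V)) ↔ F.Adj p r) := by
      intro r hr
      constructor
      · intro hFq
        have := hface h.symm hFadj.symm (C.θ h ⟨r, hr⟩) hFq
        rw [C.symm h] at this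
        simpa using this
      · intro hFp
        exact hface h hFadj ⟨r, hr⟩ hFp
    set fq : V → MvPolynomial (Fin k) ℤ :=
      fun r => if hr : G.Adj p r then linForm k (α q ((C.θ h ⟨r, hr⟩ : V))) else 1 with hfq
    have hprodq : ∏ r ∈ Sq, linForm k (α q r) = ∏ r ∈ Sp, fq r := by
      refine Finset.prod_bij'
        (i := fun r hr => (((C.θ h).symm ⟨r, (by simpa [hSq] using hr : G.Adj q r ∧ ¬ F.Adj q r).1⟩ :
            G.neighborSet p) : V))
        (j := fun r hr => ((C.θ h ⟨r, (by simpa [hSp] using hr : G.Adj p r ∧ ¬ F.Adj p r).1⟩ :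
            G.neighborSet q) : V)) ?_ ?_ ?_ ?_ ?_
      · intro a ha
        obtain ⟨haq, hFa⟩ : G.Adj q a ∧ ¬ F.Adj q a := by simpa [hSq] using ha
        have hadj : G.Adj p ((((C.θ h).symm ⟨a, haq⟩ : G.neighborSet p) : V)) :=
          ((C.θ h).symm ⟨a, haq⟩).2
        have e1 : (C.θ h ⟨(((C.θ h).symm ⟨a, haq⟩ : G.neighborSet p) : V), hadj⟩) = ⟨a, haq⟩ := by
          exact Equiv.apply_symm_apply (C.θ h) ⟨a, haq⟩
        simp only [hSp, Finset.mem_filter, Finset.mem_univ, true_and]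
        refine ⟨hadj, fun hFp => hFa ?_⟩
        have := (key _ hadj).2 hFp
        rwa [e1] at this
      · intro a ha
        obtain ⟨hap, hFa⟩ : G.Adj p a ∧ ¬ F.Adj p a := by simpa [hSp] using ha
        simp only [hSq, Finset.mem_filter, Finset.mem_univ, true_and]
        exact ⟨(C.θ h ⟨a, hap⟩).2, fun hFq => hFa ((key a hap).1 hFq)⟩
      · intro a ha
        obtain ⟨haq, _⟩ : G.Adj q a ∧ ¬ F.Adj q a := by simpa [hSq] using ha
        exact congrArg Subtype.val (Equiv.apply_symm_apply (C.θ h) ⟨a, haq⟩)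
      · intro a ha
        obtain ⟨hap, _⟩ : G.Adj p a ∧ ¬ F.Adj p a := by simpa [hSp] using ha
        exact congrArg Subtype.val (Equiv.symm_apply_apply (C.θ h) ⟨a, hap⟩)
      · intro a ha
        obtain ⟨haq, hFa⟩ : G.Adj q a ∧ ¬ F.Adj q a := by simpa [hSq] using ha
        have hadj : G.Adj p ((((C.θ h).symm ⟨a, haq⟩ : G.neighborSet p) : V)) :=
          ((C.θ h).symm ⟨a, haq⟩).2
        have e1 : (C.θ h ⟨(((C.θ h).symm ⟨a, haq⟩ : G.neighborSet p) : V), hadj⟩) = ⟨a, haq⟩ := by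
          exact Equiv.apply_symm_apply (C.θ h) ⟨a, haq⟩
        simp only [hfq]
        rw [dif_pos hadj, e1]
    have hdvd2 : ℓ ∣ (∏ r ∈ Sp, fq r) - ∏ r ∈ Sp, linForm k (α p r) := by
      refine dvd_prod_sub_prod ℓ _ _ _ ?_
      intro r hr
      obtain ⟨hrp, _⟩ : G.Adj p r ∧ ¬ F.Adj p r := by simpa [hSp] using hr
      obtain ⟨c, hc⟩ := hcompat h ⟨r, hrp⟩
      simp only [hfq]
      rw [dif_pos hrp, hc, linForm_add_smul]
      exact ⟨MvPolynomial.C c, by ring⟩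
    rw [thomClass, thomClass, if_pos hp, if_pos hq]
    have : (∏ r ∈ Sp, linForm k (α p r)) - ∏ r ∈ Sq, linForm k (α q r)
        = -((∏ r ∈ Sp, fq r) - ∏ r ∈ Sp, linForm k (α p r)) := by
      rw [hprodq]; ring
    rw [hSp, hSq] at this
    rw [this]
    exact hdvd2.neg_right
  · -- the edge is transversal to the face
    have h1 : ℓ ∣ thomClass k α F p := hdvdP p q h hFadj
    have h2 : ℓ ∣ thomClass k α F q := by
      have := hdvdP q p h.symm (fun hh => hFadj hh.symm)
      rw [hrev] at this
      exact neg_dvd.mp this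
    exact dvd_sub h1 h2
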